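/- Verde-Star duality evaluation: with u_n, v_k, c_{n,k} as in the Verde-Star setup and the dual objects ṽ_k(y) = ∏_{j=0}^{k-1}(y - h_j), c̃_{m,k} = ∏_{j=k}^{m-1} g_{j+1}/(x_m - x_j), ũ_m(y) = Σ_k c̃_{m,k} ṽ_k(y), define U_n(x) = [∏_{j=0}^{n-1}(h_n - h_j)/g_{j+1}] u_n(x) and Ũ_m(y) = [∏_{j=0}^{m-1}(x_m - x_j)/g_{j+1}] ũ_m(y). Then U_n(x_m) = Ũ_m(h_n) for all m, n ≥ 0, both being equal to Σ_{k} ∏_{j=0}^{k-1} (h_n - h_j)(x_m - x_j)/g_{j+1}. -/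

import Mathlib

variable {F : Type*} [Field F]

/-- Verde-Star polynomial `u_n` evaluated at `t`:
`u_n(t) = Σ_{k≤n} (∏_{j=k}^{n-1} g_{j+1}/(h_n - h_j)) ∏_{j<k}(t - x_j)`. -/
noncomputable def vsU (x h g : ℕ → F) (n : ℕ) (t : F) : F :=
  ∑ k ∈ Finset.range (n + 1),
    (∏ j ∈ Finset.Ico k n, g (j + 1) / (h n - h j)) * ∏ j ∈ Finset.range k, (t - x j)

/-- The normalized Verde-Star polynomial
`U_n(t) = (∏_{j<n} (h_n - h_j)/g_{j+1}) · u_n(t)`. -/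
noncomputable def vsUcap (x h g : ℕ → F) (n : ℕ) (t : F) : F :=
  (∏ j ∈ Finset.range n, (h n - h j) / g (j + 1)) * vsU x h g n t

lemma vsUcap_eq_at (x h g : ℕ → F) (m n : ℕ)
    (hsep : ∀ j < n, h n ≠ h j) (hg : ∀ j, g (j + 1) ≠ 0) :
    vsUcap x h g n (x m) =
      ∑ k ∈ Finset.range (min m n + 1),
        ∏ j ∈ Finset.range k, (h n - h j) * (x m - x j) / g (j + 1) := by
  unfold vsUcap vsU
  rw [Finset.mul_sum]
  have step1 : ∀ k ∈ Finset.range (n + 1),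
      (∏ j ∈ Finset.range n, (h n - h j) / g (j + 1)) *
        ((∏ j ∈ Finset.Ico k n, g (j + 1) / (h n - h j)) *
          ∏ j ∈ Finset.range k, (x m - x j)) =
      ∏ j ∈ Finset.range k, (h n - h j) * (x m - x j) / g (j + 1) := by
    intro k hk
    rw [Finset.mem_range, Nat.lt_succ_iff] at hk
    rw [← Finset.prod_range_mul_prod_Ico _ hk, mul_assoc]
    have h1 : (∏ j ∈ Finset.Ico k n, (h n - h j) / g (j + 1)) *
        ∏ j ∈ Finset.Ico k n, g (j + 1) / (h n - h j) = 1 := by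
      rw [← Finset.prod_mul_distrib]
      apply Finset.prod_eq_one
      intro j hj
      rw [Finset.mem_Ico] at hj
      have h2 : h n - h j ≠ 0 := sub_ne_zero.mpr (hsep j hj.2)
      field_simp
      exact div_self (hg j)
    rw [← mul_assoc (∏ j ∈ Finset.Ico k n, (h n - h j) / g (j + 1)), h1, one_mul,
      ← Finset.prod_mul_distrib]
    exact Finset.prod_congr rfl fun j _ => by ring
  rw [Finset.sum_congr rfl step1]
  refine (Finset.sum_subset ?_ ?_).symm
  · exact Finset.range_subset_range.mpr (by omega)
  · intro k hk hk'
    rw [Finset.mem_range] at hk hk'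
    have hm : m < k := by omega
    exact Finset.prod_eq_zero (Finset.mem_range.mpr hm) (by simp)

/-- Verde-Star duality evaluation: `U_n(x_m) = Ũ_m(h_n)`, where the dual data
is obtained by exchanging the roles of the sequences `x` and `h`; both sides
equal the symmetric sum `Σ_k ∏_{j<k} (h_n - h_j)(x_m - x_j)/g_{j+1}`. -/
theorem stmt13 (x h g : ℕ → F) (m n : ℕ)
    (hsep : ∀ j < n, h n ≠ h j) (xsep : ∀ j < m, x m ≠ x j)
    (hg : ∀ j, g (j + 1) ≠ 0) :
    vsUcap x h g n (x m) = vsUcap h x g m (h n) ∧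
    vsUcap x h g n (x m) =
      ∑ k ∈ Finset.range (min m n + 1),
        ∏ j ∈ Finset.range k, (h n - h j) * (x m - x j) / g (j + 1) := by
  have e1 := vsUcap_eq_at x h g m n hsep hg
  have e2 := vsUcap_eq_at h x g n m xsep hg
  refine ⟨?_, e1⟩
  rw [e1, e2, Nat.min_comm]
  exact Finset.sum_congr rfl fun k _ => Finset.prod_congr rfl fun j _ => by ring
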